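/- arXiv:2304.05069 — 7 statements merged into one kernel-verified Lean document; each statement's English description precedes it below -/
import Mathlib

section
/- Let U, P : (0,∞) → ℝ be twice continuously differentiable functions such that P(r) = r·U'(r) − U(r) for all r > 0, and suppose there exists a constant A > 0 such that |P''(r)| ≤ A·U''(r) for all r > 0. Then for all r, s > 0 one has |P(r) − P(s) − P'(s)·(r − s)| ≤ A·(U(r) − U(s) − U'(s)·(r − s)). -/
open Set

lemma taylor_nonneg_of_deriv2_nonneg (g : ℝ → ℝ)
    (hg : ContDiffOn ℝ 2 g (Set.Ioi 0))
    (h2 : ∀ x > 0, 0 ≤ deriv (deriv g) x) :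
    ∀ r > 0, ∀ s > 0, 0 ≤ g r - g s - deriv g s * (r - s) := by
  have hop : IsOpen (Set.Ioi (0:ℝ)) := isOpen_Ioi
  have hd1 : DifferentiableOn ℝ g (Set.Ioi 0) := hg.differentiableOn (by norm_num)
  have hd2 : ContDiffOn ℝ 1 (deriv g) (Set.Ioi 0) :=
    hg.deriv_of_isOpen hop (by norm_num)
  have hd2' : DifferentiableOn ℝ (deriv g) (Set.Ioi 0) :=
    hd2.differentiableOn (by norm_num)
  have hconv : ConvexOn ℝ (Set.Ioi 0) g := by
    apply convexOn_of_deriv2_nonneg (convex_Ioi 0) hg.continuousOn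
    · rwa [interior_Ioi]
    · rwa [interior_Ioi]
    · rw [interior_Ioi]
      intro x hx
      simpa [Function.iterate_succ, Function.iterate_one] using h2 x hx
  intro r hr s hs
  have hdg : DifferentiableAt ℝ g s :=
    (hd1 s (Set.mem_Ioi.2 hs)).differentiableAt (hop.mem_nhds hs)
  rcases lt_trichotomy r s with h | h | h
  · have h1 := hconv.slope_le_deriv (Set.mem_Ioi.2 hr) (Set.mem_Ioi.2 hs) h hdg
    rw [slope_def_field] at h1
    have h2' := (div_le_iff₀ (by linarith : (0:ℝ) < s - r)).mp h1
    nlinarith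
  · simp [h]
  · have h1 := hconv.deriv_le_slope (Set.mem_Ioi.2 hs) (Set.mem_Ioi.2 hr) h hdg
    rw [slope_def_field] at h1
    have h2' := (le_div_iff₀ (by linarith : (0:ℝ) < r - s)).mp h1
    nlinarith

/-- Relative pressure bound: if `P(r) = r U'(r) - U(r)` and `|P''| ≤ A U''` on `(0,∞)`,
then `|P(r|s)| ≤ A · U(r|s)` for all `r, s > 0`. -/
theorem relative_pressure_bound
    (U P : ℝ → ℝ) (A : ℝ) (hA : 0 < A)
    (hU : ContDiffOn ℝ 2 U (Set.Ioi 0))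
    (hP : ContDiffOn ℝ 2 P (Set.Ioi 0))
    (hPU : ∀ r > 0, P r = r * deriv U r - U r)
    (hbound : ∀ r > 0, |deriv (deriv P) r| ≤ A * deriv (deriv U) r) :
    ∀ r > 0, ∀ s > 0,
      |P r - P s - deriv P s * (r - s)| ≤ A * (U r - U s - deriv U s * (r - s)) := by
  have hop : IsOpen (Set.Ioi (0:ℝ)) := isOpen_Ioi
  have hdU : ∀ x ∈ Set.Ioi (0:ℝ), DifferentiableAt ℝ U x := fun x hx =>
    (hU.differentiableOn (by norm_num) x hx).differentiableAt (hop.mem_nhds hx)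
  have hdP : ∀ x ∈ Set.Ioi (0:ℝ), DifferentiableAt ℝ P x := fun x hx =>
    (hP.differentiableOn (by norm_num) x hx).differentiableAt (hop.mem_nhds hx)
  have hdU' : ∀ x ∈ Set.Ioi (0:ℝ), DifferentiableAt ℝ (deriv U) x := fun x hx =>
    ((hU.deriv_of_isOpen (m := 1) hop (by norm_num)).differentiableOn one_ne_zero x hx).differentiableAt
      (hop.mem_nhds hx)
  have hdP' : ∀ x ∈ Set.Ioi (0:ℝ), DifferentiableAt ℝ (deriv P) x := fun x hx =>
    ((hP.deriv_of_isOpen (m := 1) hop (by norm_num)).differentiableOn one_ne_zero x hx).differentiableAt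
      (hop.mem_nhds hx)
  -- the two auxiliary convex functions
  have key : ∀ (c : ℝ), c = 1 ∨ c = -1 →
      ∀ r > 0, ∀ s > 0,
        0 ≤ (A * U r + c * P r) - (A * U s + c * P s)
          - (A * deriv U s + c * deriv P s) * (r - s) := by
    intro c hc
    set g : ℝ → ℝ := fun x => A * U x + c * P x with hgdef
    have hcd : ContDiffOn ℝ 2 g (Set.Ioi 0) :=
      (contDiffOn_const.mul hU).add (contDiffOn_const.mul hP)
    have hderiv : ∀ x ∈ Set.Ioi (0:ℝ), deriv g x = A * deriv U x + c * deriv P x := by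
      intro x hx
      rw [hgdef]
      rw [deriv_fun_add ((hdU x hx).const_mul A) ((hdP x hx).const_mul c),
        deriv_const_mul A (hdU x hx), deriv_const_mul c (hdP x hx)]
    have h2 : ∀ x > 0, 0 ≤ deriv (deriv g) x := by
      intro x hx
      have hev : deriv g =ᶠ[nhds x] fun y => A * deriv U y + c * deriv P y :=
        Filter.eventuallyEq_of_mem (hop.mem_nhds hx) hderiv
      rw [hev.deriv_eq, deriv_fun_add ((hdU' x hx).const_mul A) ((hdP' x hx).const_mul c),
        deriv_const_mul A (hdU' x hx), deriv_const_mul c (hdP' x hx)]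
      have hb := hbound x hx
      rcases hc with rfl | rfl
      · have := neg_abs_le (deriv (deriv P) x)
        nlinarith
      · have := le_abs_self (deriv (deriv P) x)
        nlinarith
    intro r hr s hs
    have := taylor_nonneg_of_deriv2_nonneg g hcd h2 r hr s hs
    rwa [hderiv s (Set.mem_Ioi.2 hs)] at this
  intro r hr s hs
  have k1 := key 1 (Or.inl rfl) r hr s hs
  have k2 := key (-1) (Or.inr rfl) r hr s hs
  rw [abs_le]
  constructor <;> nlinarith
end

section
/- Let Ω ⊆ ℝ^d be a compact set, let x_1, …, x_N be points of the convex hull of Ω, and let w_1, …, w_N ∈ ℝ. If every Laguerre cell L_i(X,w) has positive Lebesgue measure, then for all indices i, j one has |w_i − w_j| ≤ 2·diam(Ω)·|x_i − x_j|, where diam(Ω) is the diameter of Ω and |·| denotes the Euclidean norm on ℝ^d. -/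
open MeasureTheory RealInnerProductSpace

lemma norm_sq_sub_bound {d : ℕ} {Ω : Set (EuclideanSpace ℝ (Fin d))} (hΩ : IsCompact Ω)
    {x a b : EuclideanSpace ℝ (Fin d)} (hx : x ∈ Ω)
    (ha : a ∈ convexHull ℝ Ω) (hb : b ∈ convexHull ℝ Ω) :
    ‖x - b‖ ^ 2 - ‖x - a‖ ^ 2 ≤ 2 * Metric.diam Ω * ‖a - b‖ := by
  have hbd : Bornology.IsBounded (convexHull ℝ Ω) := (isBounded_convexHull.mpr hΩ.isBounded)
  have hx' : x ∈ convexHull ℝ Ω := subset_convexHull ℝ Ω hx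
  have h1 : dist x a ≤ Metric.diam Ω := by
    rw [← convexHull_diam]
    exact Metric.dist_le_diam_of_mem hbd hx' ha
  have h2 : dist x b ≤ Metric.diam Ω := by
    rw [← convexHull_diam]
    exact Metric.dist_le_diam_of_mem hbd hx' hb
  have key : ‖x - b‖ ^ 2 - ‖x - a‖ ^ 2
      = ⟪(x - b) + (x - a), (x - b) - (x - a)⟫ := by
    rw [norm_sub_sq_real x b, norm_sub_sq_real x a]
    simp only [inner_add_left, inner_sub_right, inner_sub_left,
      real_inner_self_eq_norm_sq, real_inner_comm a x, real_inner_comm b x,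
      real_inner_comm b a]
    ring
  have hab : (x - b) - (x - a) = a - b := by abel
  rw [hab] at key
  calc ‖x - b‖ ^ 2 - ‖x - a‖ ^ 2 = ⟪(x - b) + (x - a), a - b⟫ := key
    _ ≤ ‖(x - b) + (x - a)‖ * ‖a - b‖ := real_inner_le_norm _ _
    _ ≤ (‖x - b‖ + ‖x - a‖) * ‖a - b‖ := by
        apply mul_le_mul_of_nonneg_right (norm_add_le _ _) (norm_nonneg _)
    _ ≤ 2 * Metric.diam Ω * ‖a - b‖ := by
        have e1 : ‖x - a‖ = dist x a := (dist_eq_norm _ _).symm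
        have e2 : ‖x - b‖ = dist x b := (dist_eq_norm _ _).symm
        apply mul_le_mul_of_nonneg_right _ (norm_nonneg _)
        rw [e1, e2]; linarith

/-- Lipschitz bound on Laguerre weights: if every Laguerre cell of the tessellation of a
compact set `Ω` has positive Lebesgue measure, then `|wᵢ - wⱼ| ≤ 2 diam(Ω) |xᵢ - xⱼ|`. -/
theorem laguerre_weights_lipschitz
    (d N : ℕ) (Ω : Set (EuclideanSpace ℝ (Fin d))) (hΩ : IsCompact Ω)
    (X : Fin N → EuclideanSpace ℝ (Fin d))
    (hX : ∀ i, X i ∈ convexHull ℝ Ω)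
    (w : Fin N → ℝ)
    (L : Fin N → Set (EuclideanSpace ℝ (Fin d)))
    (hL : ∀ i, L i = {x ∈ Ω | ∀ j, ‖x - X i‖ ^ 2 - w i ≤ ‖x - X j‖ ^ 2 - w j})
    (hpos : ∀ i, 0 < volume (L i)) :
    ∀ i j, |w i - w j| ≤ 2 * Metric.diam Ω * ‖X i - X j‖ := by
  have hne : ∀ i, (L i).Nonempty := fun i =>
    MeasureTheory.nonempty_of_measure_ne_zero (hpos i).ne'
  intro i j
  have hi := hne i; rw [hL i] at hi
  have hj := hne j; rw [hL j] at hj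
  obtain ⟨x, hxΩ, hxle⟩ := hi
  obtain ⟨y, hyΩ, hyle⟩ := hj
  rw [abs_sub_le_iff]
  constructor
  · have h := hyle i
    have hb := norm_sq_sub_bound hΩ hyΩ (hX j) (hX i)
    rw [show ‖X j - X i‖ = ‖X i - X j‖ from norm_sub_rev _ _] at hb
    linarith
  · have h := hxle j
    have hb := norm_sq_sub_bound hΩ hxΩ (hX i) (hX j)
    linarith
end

section
/- Let Ω ⊆ ℝ^d be a compact set, let x_1, …, x_N ∈ ℝ^d and w_1, …, w_N ∈ ℝ, and let i ≠ j be two indices such that the Laguerre cells L_i(X,w) and L_j(X,w) both have positive (finite) Lebesgue measure. Let b_i and b_j denote the barycenters of L_i(X,w) and L_j(X,w) with respect to Lebesgue measure. Then ⟨x_i − x_j, b_i − b_j⟩ ≥ 0, where ⟨·,·⟩ is the Euclidean inner product on ℝ^d. -/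
open MeasureTheory RealInnerProductSpace

/-- Monotonicity of Laguerre cell barycenters: `⟨xᵢ - xⱼ, bᵢ - bⱼ⟩ ≥ 0` where `bᵢ` is the
barycenter of the Laguerre cell `Lᵢ(X,w)`. -/
theorem laguerre_barycenters_monotone
    (d N : ℕ) (Ω : Set (EuclideanSpace ℝ (Fin d))) (hΩ : IsCompact Ω)
    (X : Fin N → EuclideanSpace ℝ (Fin d)) (w : Fin N → ℝ)
    (L : Fin N → Set (EuclideanSpace ℝ (Fin d)))
    (hL : ∀ i, L i = {x ∈ Ω | ∀ j, ‖x - X i‖ ^ 2 - w i ≤ ‖x - X j‖ ^ 2 - w j})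
    (i j : Fin N) (hij : i ≠ j)
    (hipos : 0 < volume (L i)) (hifin : volume (L i) < ⊤)
    (hjpos : 0 < volume (L j)) (hjfin : volume (L j) < ⊤)
    (b : Fin N → EuclideanSpace ℝ (Fin d))
    (hb : ∀ k, k = i ∨ k = j →
      b k = ((volume (L k)).toReal)⁻¹ • ∫ x in L k, x) :
    0 ≤ ⟪X i - X j, b i - b j⟫ := by
  set c := X i - X j with hc
  set m := (‖X i‖ ^ 2 - ‖X j‖ ^ 2 - w i + w j) / 2 with hm
  -- closedness / compactness
  have hclosed : ∀ k, IsClosed (L k) := by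
    intro k
    rw [hL k]
    have : {x ∈ Ω | ∀ l, ‖x - X k‖ ^ 2 - w k ≤ ‖x - X l‖ ^ 2 - w l}
        = Ω ∩ ⋂ l, {x | ‖x - X k‖ ^ 2 - w k ≤ ‖x - X l‖ ^ 2 - w l} := by
      ext x; simp [Set.mem_iInter]
    rw [this]
    exact hΩ.isClosed.inter (isClosed_iInter fun l =>
      isClosed_le (by fun_prop) (by fun_prop))
  have hcompact : ∀ k, IsCompact (L k) := fun k =>
    hΩ.of_isClosed_subset (hclosed k) (by rw [hL k]; exact fun x hx => hx.1)
  have hint : ∀ k, IntegrableOn (fun x : EuclideanSpace ℝ (Fin d) => x) (L k) :=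
    fun k => (continuous_id.continuousOn).integrableOn_compact (hcompact k)
  have hintc : ∀ k, IntegrableOn (fun x : EuclideanSpace ℝ (Fin d) => ⟪c, x⟫) (L k) :=
    fun k => ((continuous_const.inner continuous_id).continuousOn).integrableOn_compact
      (hcompact k)
  -- pointwise bounds
  have hbound_i : ∀ x ∈ L i, m ≤ ⟪c, x⟫ := by
    intro x hx
    rw [hL i] at hx
    have h := hx.2 j
    rw [@norm_sub_sq_real, @norm_sub_sq_real] at h
    have h1 : ⟪c, x⟫ = ⟪x, X i⟫ - ⟪x, X j⟫ := by
      rw [hc, inner_sub_left, real_inner_comm (X i) x, real_inner_comm (X j) x]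
    rw [h1]; linarith
  have hbound_j : ∀ x ∈ L j, ⟪c, x⟫ ≤ m := by
    intro x hx
    rw [hL j] at hx
    have h := hx.2 i
    rw [@norm_sub_sq_real, @norm_sub_sq_real] at h
    have h1 : ⟪c, x⟫ = ⟪x, X i⟫ - ⟪x, X j⟫ := by
      rw [hc, inner_sub_left, real_inner_comm (X i) x, real_inner_comm (X j) x]
    rw [h1]; linarith
  have hmeasi := (hclosed i).measurableSet
  have hmeasj := (hclosed j).measurableSet
  -- integral bounds
  have hvi : (0:ℝ) < (volume (L i)).toReal := ENNReal.toReal_pos hipos.ne' hifin.ne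
  have hvj : (0:ℝ) < (volume (L j)).toReal := ENNReal.toReal_pos hjpos.ne' hjfin.ne
  have hIi : m * (volume (L i)).toReal ≤ ∫ x in L i, ⟪c, x⟫ := by
    have := setIntegral_mono_on (integrableOn_const hifin.ne) (hintc i)
      hmeasi hbound_i
    simpa [mul_comm, Measure.real] using this
  have hIj : ∫ x in L j, ⟪c, x⟫ ≤ m * (volume (L j)).toReal := by
    have := setIntegral_mono_on (hintc j) (integrableOn_const hjfin.ne)
      hmeasj hbound_j
    simpa [mul_comm, Measure.real] using this
  -- inner with barycenters
  have hbi : ⟪c, b i⟫ = ((volume (L i)).toReal)⁻¹ * ∫ x in L i, ⟪c, x⟫ := by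
    rw [hb i (Or.inl rfl), inner_smul_right, integral_inner (hint i)]
  have hbj : ⟪c, b j⟫ = ((volume (L j)).toReal)⁻¹ * ∫ x in L j, ⟪c, x⟫ := by
    rw [hb j (Or.inr rfl), inner_smul_right, integral_inner (hint j)]
  have h1 : m ≤ ⟪c, b i⟫ := by
    rw [hbi, le_inv_mul_iff₀ hvi]
    linarith [hIi, mul_comm m (volume (L i)).toReal]
  have h2 : ⟪c, b j⟫ ≤ m := by
    rw [hbj]
    calc ((volume (L j)).toReal)⁻¹ * ∫ x in L j, ⟪c, x⟫
        ≤ ((volume (L j)).toReal)⁻¹ * (m * (volume (L j)).toReal) :=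
          mul_le_mul_of_nonneg_left hIj (by positivity)
      _ = m := by field_simp
  rw [inner_sub_right]
  linarith
end

section
/- Let Ω ⊆ ℝ^d be a compact set of positive Lebesgue measure, ε > 0, m_1, …, m_N > 0, τ ≥ 0, and U : (0,∞) → ℝ. For X = (x_1, …, x_N) ∈ (ℝ^d)^N define F_ε(X) as the infimum, over all Lebesgue-measurable labelings T : Ω → {1, …, N}, of ∫_Ω |x − x_{T(x)}|²/(2ε) dx + Σ_{i=1}^N U(m_i/|T^{-1}(i)|)·|T^{-1}(i)|, where a summand with |T^{-1}(i)| = 0 is interpreted as +∞. Suppose the labeling T* attains the infimum defining F_ε(X), each cell L_i := (T*)^{-1}(i) has positive Lebesgue measure, and let b_i be the barycenter of L_i. Define X' = (x_1', …, x_N') by x_i' := b_i + exp(−|L_i|·τ/(m_i·ε))·(x_i − b_i). Then F_ε(X') ≤ F_ε(X). -/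
open MeasureTheory

/-- The cost of a measurable labeling `T` of `Ω`:
`∫_Ω |x - x_{T(x)}|²/(2ε) dx + Σᵢ U(mᵢ/|T⁻¹(i)|)·|T⁻¹(i)|`, with a summand equal to `+∞`
whenever the corresponding cell is Lebesgue-null. -/
noncomputable def laguerreCost {d N : ℕ} (Ω : Set (EuclideanSpace ℝ (Fin d)))
    (ε : ℝ) (m : Fin N → ℝ) (U : ℝ → ℝ)
    (X : Fin N → EuclideanSpace ℝ (Fin d))
    (T : EuclideanSpace ℝ (Fin d) → Fin N) : EReal :=
  ((∫ x in Ω, ‖x - X (T x)‖ ^ 2 / (2 * ε) : ℝ) : EReal)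
    + ∑ i, (if volume (T ⁻¹' {i} ∩ Ω) = 0 then (⊤ : EReal)
        else ((U (m i / (volume (T ⁻¹' {i} ∩ Ω)).toReal)
                * (volume (T ⁻¹' {i} ∩ Ω)).toReal : ℝ) : EReal))

/-- The discrete energy `F_ε(X)`: infimum of the labeling cost over all measurable
labelings `T : Ω → {1,…,N}`. -/
noncomputable def discreteEnergy {d N : ℕ} (Ω : Set (EuclideanSpace ℝ (Fin d)))
    (ε : ℝ) (m : Fin N → ℝ) (U : ℝ → ℝ)
    (X : Fin N → EuclideanSpace ℝ (Fin d)) : EReal :=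
  ⨅ T : {T : EuclideanSpace ℝ (Fin d) → Fin N // Measurable T},
    laguerreCost Ω ε m U X T.1

open scoped RealInnerProductSpace

/-- The barycenter minimizes the integrated squared distance: moving a point closer
(in norm) to the barycenter does not increase `∫ ‖x - ·‖²`. -/
lemma barycenter_contract {d : ℕ} (L : Set (EuclideanSpace ℝ (Fin d)))
    (hLm : MeasurableSet L) (hfin : volume L ≠ ⊤) (h0 : volume L ≠ 0)
    (R : ℝ) (hR : L ⊆ Metric.closedBall 0 R)
    (y z : EuclideanSpace ℝ (Fin d))
    (hz : ‖z - ((volume L).toReal)⁻¹ • ∫ x in L, x‖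
        ≤ ‖y - ((volume L).toReal)⁻¹ • ∫ x in L, x‖) :
    ∫ x in L, ‖x - z‖ ^ 2 ≤ ∫ x in L, ‖x - y‖ ^ 2 := by
  set b : EuclideanSpace ℝ (Fin d) := ((volume L).toReal)⁻¹ • ∫ x in L, x with hbdef
  set V : ℝ := (volume L).toReal with hV
  have hVpos : 0 < V := ENNReal.toReal_pos h0 hfin
  have hKcomp : IsCompact (Metric.closedBall (0 : EuclideanSpace ℝ (Fin d)) R) :=
    isCompact_closedBall 0 R
  have hid : IntegrableOn (fun x : EuclideanSpace ℝ (Fin d) => x) L volume := by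
    exact ((continuous_id.continuousOn.integrableOn_compact hKcomp).mono_set hR)
  have hsub : IntegrableOn (fun x : EuclideanSpace ℝ (Fin d) => x - b) L volume := by
    exact (((continuous_id.sub continuous_const).continuousOn.integrableOn_compact
      hKcomp).mono_set hR)
  have hzero : (∫ x in L, (x - b)) = 0 := by
    rw [integral_sub hid (integrableOn_const hfin),
      setIntegral_const, measureReal_def, ← hV]
    rw [hbdef, smul_smul, mul_inv_cancel₀ hVpos.ne', one_smul, sub_self]
  have key : ∀ w : EuclideanSpace ℝ (Fin d),
      (∫ x in L, ‖x - w‖ ^ 2) = (∫ x in L, ‖x - b‖ ^ 2) + V * ‖w - b‖ ^ 2 := by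
    intro w
    have hpt : ∀ x : EuclideanSpace ℝ (Fin d),
        ‖x - w‖ ^ 2 = ‖x - b‖ ^ 2 - 2 * ⟪w - b, x - b⟫ + ‖w - b‖ ^ 2 := by
      intro x
      have : x - w = (x - b) - (w - b) := by abel
      rw [this, norm_sub_sq_real, real_inner_comm]
    have h1 : IntegrableOn (fun x : EuclideanSpace ℝ (Fin d) => ‖x - b‖ ^ 2) L volume := by
      exact (((((continuous_id.sub continuous_const).norm).pow
        2).continuousOn.integrableOn_compact hKcomp).mono_set hR)
    have hc2 : Continuous (fun x : EuclideanSpace ℝ (Fin d) => 2 * ⟪w - b, x - b⟫) :=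
      continuous_const.mul ((continuous_const.inner
        (continuous_id.sub continuous_const) :
          Continuous fun x : EuclideanSpace ℝ (Fin d) => ⟪w - b, x - b⟫))
    have h2 : IntegrableOn (fun x : EuclideanSpace ℝ (Fin d) => 2 * ⟪w - b, x - b⟫) L volume := by
      exact ((hc2.continuousOn.integrableOn_compact hKcomp).mono_set hR)
    calc (∫ x in L, ‖x - w‖ ^ 2)
        = ∫ x in L, (‖x - b‖ ^ 2 - 2 * ⟪w - b, x - b⟫ + ‖w - b‖ ^ 2) := by
          exact setIntegral_congr_fun hLm fun x _ => hpt x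
      _ = (∫ x in L, (‖x - b‖ ^ 2 - 2 * ⟪w - b, x - b⟫)) + ∫ x in L, ‖w - b‖ ^ 2 := by
          exact integral_add (h1.sub h2) (integrableOn_const hfin)
      _ = (∫ x in L, ‖x - b‖ ^ 2) - (∫ x in L, 2 * ⟪w - b, x - b⟫) + V * ‖w - b‖ ^ 2 := by
          rw [integral_sub h1 h2, setIntegral_const, smul_eq_mul, measureReal_def, ← hV]
      _ = (∫ x in L, ‖x - b‖ ^ 2) + V * ‖w - b‖ ^ 2 := by
          have : (∫ x in L, 2 * ⟪w - b, x - b⟫) = 2 * ⟪w - b, ∫ x in L, (x - b)⟫ := by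
            rw [integral_const_mul, integral_inner hsub]
          rw [this, hzero, inner_zero_right, mul_zero, sub_zero]
  rw [key z, key y]
  have hsq : ‖z - b‖ ^ 2 ≤ ‖y - b‖ ^ 2 := by
    have := hz
    nlinarith [norm_nonneg (z - b), norm_nonneg (y - b)]
  nlinarith [hVpos]

/-- One step of the explicit exponential time discretization of the gradient flow of `F_ε`
dissipates the energy: `F_ε(X') ≤ F_ε(X)`. -/
theorem discreteEnergy_dissipation
    (d N : ℕ) (Ω : Set (EuclideanSpace ℝ (Fin d))) (hΩ : IsCompact Ω)
    (hΩpos : 0 < volume Ω)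
    (ε : ℝ) (hε : 0 < ε) (m : Fin N → ℝ) (hm : ∀ i, 0 < m i)
    (τ : ℝ) (hτ : 0 ≤ τ) (U : ℝ → ℝ)
    (X : Fin N → EuclideanSpace ℝ (Fin d))
    (T : EuclideanSpace ℝ (Fin d) → Fin N) (hTmeas : Measurable T)
    (hTopt : laguerreCost Ω ε m U X T = discreteEnergy Ω ε m U X)
    (L : Fin N → Set (EuclideanSpace ℝ (Fin d)))
    (hL : ∀ i, L i = T ⁻¹' {i} ∩ Ω)
    (hpos : ∀ i, 0 < volume (L i))
    (b : Fin N → EuclideanSpace ℝ (Fin d))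
    (hb : ∀ i, b i = ((volume (L i)).toReal)⁻¹ • ∫ x in L i, x)
    (X' : Fin N → EuclideanSpace ℝ (Fin d))
    (hX' : ∀ i, X' i = b i
      + Real.exp (-((volume (L i)).toReal * τ) / (m i * ε)) • (X i - b i)) :
    discreteEnergy Ω ε m U X' ≤ discreteEnergy Ω ε m U X := by
  classical
  have hΩm : MeasurableSet Ω := hΩ.isClosed.measurableSet
  obtain ⟨R, hΩR⟩ := hΩ.isBounded.subset_closedBall 0
  have hLsub : ∀ i, L i ⊆ Ω := fun i => by rw [hL i]; exact Set.inter_subset_right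
  have hLm : ∀ i, MeasurableSet (L i) := fun i => by
    rw [hL i]; exact (hTmeas (measurableSet_singleton i)).inter hΩm
  have hLfin : ∀ i, volume (L i) ≠ ⊤ := fun i =>
    ((measure_mono (hLsub i)).trans_lt hΩ.measure_lt_top).ne
  have hLR : ∀ i, L i ⊆ Metric.closedBall 0 R := fun i => (hLsub i).trans hΩR
  -- the union decomposition of Ω
  have hUnion : Ω = ⋃ i, L i := by
    ext x
    constructor
    · intro hx
      exact Set.mem_iUnion.mpr ⟨T x, by rw [hL]; exact ⟨rfl, hx⟩⟩
    · intro hx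
      obtain ⟨i, hi⟩ := Set.mem_iUnion.mp hx
      exact hLsub i hi
  have hdisj : Pairwise (Function.onFun Disjoint L) := by
    intro i j hij
    rw [Function.onFun, Set.disjoint_left]
    intro x hxi hxj
    rw [hL i] at hxi; rw [hL j] at hxj
    exact hij (hxi.1.symm.trans hxj.1)
  -- integrability of the transport costs
  have hKcomp : IsCompact (Metric.closedBall (0 : EuclideanSpace ℝ (Fin d)) R) :=
    isCompact_closedBall 0 R
  have hIntOn : ∀ (Y : Fin N → EuclideanSpace ℝ (Fin d)),
      IntegrableOn (fun x => ‖x - Y (T x)‖ ^ 2 / (2 * ε)) Ω volume := by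
    intro Y
    rw [hUnion]
    rw [integrableOn_finite_iUnion]
    intro i
    have hcont : Continuous (fun x : EuclideanSpace ℝ (Fin d) => ‖x - Y i‖ ^ 2 / (2 * ε)) :=
      (((continuous_id.sub continuous_const).norm).pow 2).div_const _
    refine ((hcont.continuousOn.integrableOn_compact hKcomp).mono_set (hLR i)).congr_fun
      ?_ (hLm i)
    intro x hx
    rw [hL i] at hx
    simp only [Set.mem_inter_iff, Set.mem_preimage, Set.mem_singleton_iff] at hx
    simp only [hx.1]
  -- the per-cell equalities and inequality
  have hcell : ∀ (Y : Fin N → EuclideanSpace ℝ (Fin d)) i,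
      (∫ x in L i, ‖x - Y (T x)‖ ^ 2 / (2 * ε)) = ∫ x in L i, ‖x - Y i‖ ^ 2 / (2 * ε) := by
    intro Y i
    refine setIntegral_congr_fun (hLm i) fun x hx => ?_
    rw [hL i] at hx
    simp only [Set.mem_inter_iff, Set.mem_preimage, Set.mem_singleton_iff] at hx
    simp only [hx.1]
  have hsplit : ∀ (Y : Fin N → EuclideanSpace ℝ (Fin d)),
      (∫ x in Ω, ‖x - Y (T x)‖ ^ 2 / (2 * ε))
        = ∑ i, ∫ x in L i, ‖x - Y i‖ ^ 2 / (2 * ε) := by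
    intro Y
    have h1 := hIntOn Y
    rw [hUnion] at h1 ⊢
    rw [integral_iUnion hLm hdisj h1, tsum_fintype]
    exact Finset.sum_congr rfl fun i _ => hcell Y i
  -- main integral inequality
  have hmain : (∫ x in Ω, ‖x - X' (T x)‖ ^ 2 / (2 * ε))
      ≤ ∫ x in Ω, ‖x - X (T x)‖ ^ 2 / (2 * ε) := by
    rw [hsplit X', hsplit X]
    refine Finset.sum_le_sum fun i _ => ?_
    simp only [div_eq_mul_inv]
    rw [integral_mul_const, integral_mul_const]
    refine mul_le_mul_of_nonneg_right ?_ (by positivity)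
    refine barycenter_contract (L i) (hLm i) (hLfin i) (hpos i).ne' R (hLR i) (X i) (X' i) ?_
    rw [← hb i]
    have hXi : X' i - b i
        = Real.exp (-((volume (L i)).toReal * τ) / (m i * ε)) • (X i - b i) := by
      rw [hX' i]; abel
    rw [hXi, norm_smul, Real.norm_eq_abs,
      abs_of_pos (Real.exp_pos _)]
    have hexp : Real.exp (-((volume (L i)).toReal * τ) / (m i * ε)) ≤ 1 := by
      rw [Real.exp_le_one_iff]
      apply div_nonpos_of_nonpos_of_nonneg
      · simp only [neg_nonpos]
        exact mul_nonneg ENNReal.toReal_nonneg hτ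
      · exact (mul_pos (hm i) hε).le
    calc Real.exp (-((volume (L i)).toReal * τ) / (m i * ε)) * ‖X i - b i‖
        ≤ 1 * ‖X i - b i‖ := mul_le_mul_of_nonneg_right hexp (norm_nonneg _)
      _ = ‖X i - b i‖ := one_mul _
  -- conclude
  rw [← hTopt]
  refine le_trans (iInf_le _ ⟨T, hTmeas⟩) ?_
  unfold laguerreCost
  exact add_le_add (EReal.coe_le_coe_iff.mpr hmain) le_rfl
end

section
/- Let Ω ⊆ ℝ^d be a compact set of positive Lebesgue measure |Ω|, ε > 0, m_1, …, m_N > 0, and U : (0,∞) → ℝ. For X = (x_1, …, x_N) ∈ (ℝ^d)^N define F_ε(X) as the infimum, over all Lebesgue-measurable labelings T : Ω → {1, …, N}, of ∫_Ω |x − x_{T(x)}|²/(2ε) dx + Σ_{i=1}^N U(m_i/|T^{-1}(i)|)·|T^{-1}(i)|, where a summand with |T^{-1}(i)| = 0 is interpreted as +∞. Suppose a labeling T attains the infimum defining F_ε(X), each cell L_i := T^{-1}(i) has positive Lebesgue measure, and let b_i be the barycenter of L_i. Then for every Y = (y_1, …, y_N) ∈ (ℝ^d)^N one has F_ε(Y)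 ≤ F_ε(X) + Σ_{i=1}^N (|L_i|/ε)·⟨x_i − b_i, y_i − x_i⟩ + (|Ω|/(2ε))·Σ_{i=1}^N |x_i − y_i|². -/
open MeasureTheory RealInnerProductSpace

/-- One-cell expansion of the quadratic transport cost around `p`. -/
lemma cell_expand {d : ℕ} {L : Set (EuclideanSpace ℝ (Fin d))}
    (hInt1 : IntegrableOn (fun x => x) L volume)
    (hLc : (volume L).toReal ≠ 0) (hLfin : volume L ≠ ⊤)
    {ε : ℝ} (hε : 0 < ε)
    (p y b : EuclideanSpace ℝ (Fin d))
    (hIp : IntegrableOn (fun x : EuclideanSpace ℝ (Fin d) => ‖x - p‖ ^ 2) L volume)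
    (hb : b = ((volume L).toReal)⁻¹ • ∫ x in L, x) :
    ∫ x in L, ‖x - y‖ ^ 2 / (2 * ε)
      = (∫ x in L, ‖x - p‖ ^ 2 / (2 * ε))
        + ((volume L).toReal / ε) * ⟪p - b, y - p⟫
        + (volume L).toReal / (2 * ε) * ‖p - y‖ ^ 2 := by
  set c : ℝ := (volume L).toReal with hc
  haveI : Fact (volume L < ⊤) := ⟨hLfin.lt_top⟩
  have hconstInt : ∀ q : EuclideanSpace ℝ (Fin d), IntegrableOn (fun _ => q) L volume :=
    fun q => integrableOn_const hLfin
  have hconstIntR : ∀ r : ℝ, IntegrableOn (fun _ => r) L volume :=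
    fun r => integrableOn_const hLfin
  have hIx : ∫ x in L, x = c • b := by
    rw [hb, smul_smul, mul_inv_cancel₀ hLc, one_smul]
  have hsub : IntegrableOn (fun x => x - p) L volume := hInt1.sub (hconstInt p)
  have hIsub : ∫ x in L, (x - p) = c • (b - p) := by
    rw [integral_sub hInt1 (hconstInt p), setIntegral_const, hIx, smul_sub, measureReal_def, ← hc]
  have hInner : IntegrableOn (fun x => ⟪p - y, x - p⟫) L volume :=
    hsub.const_inner (p - y)
  have hinner_eq : ⟪p - y, b - p⟫ = ⟪p - b, y - p⟫ := by
    rw [← inner_neg_neg (𝕜 := ℝ), neg_sub, neg_sub, real_inner_comm]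
  have hIinner : ∫ x in L, ⟪p - y, x - p⟫ = c * ⟪p - b, y - p⟫ := by
    rw [integral_inner hsub (p - y), hIsub, real_inner_smul_right, hinner_eq]
  have key : (fun x : EuclideanSpace ℝ (Fin d) => ‖x - y‖ ^ 2)
      = fun x => ‖x - p‖ ^ 2 + (2 * ⟪p - y, x - p⟫ + ‖p - y‖ ^ 2) := by
    funext x
    have hxy : x - y = (x - p) + (p - y) := by abel
    rw [hxy, norm_add_sq_real]
    rw [real_inner_comm]
    ring
  have hI : ∫ x in L, ‖x - y‖ ^ 2
      = (∫ x in L, ‖x - p‖ ^ 2) + (2 * (c * ⟪p - b, y - p⟫) + c * ‖p - y‖ ^ 2) := by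
    have H : IntegrableOn (fun x => 2 * ⟪p - y, x - p⟫ + ‖p - y‖ ^ 2) L volume :=
      (hInner.const_mul 2).add (hconstIntR (‖p - y‖ ^ 2))
    have H2 : IntegrableOn (fun x => 2 * ⟪p - y, x - p⟫) L volume := hInner.const_mul 2
    rw [key, integral_add hIp H, integral_add H2 (hconstIntR (‖p - y‖ ^ 2)),
      integral_const_mul, hIinner, setIntegral_const, smul_eq_mul, measureReal_def, ← hc]
  rw [integral_div, integral_div, hI]
  field_simp
  ring

/-- Fréchet superdifferential inequality for the discrete energy: for every `Y`,
`F_ε(Y) ≤ F_ε(X) + Σᵢ (|Lᵢ|/ε)⟨xᵢ - bᵢ, yᵢ - xᵢ⟩ + (|Ω|/(2ε)) Σᵢ |xᵢ - yᵢ|²`. -/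
theorem discreteEnergy_superdifferential
    (d N : ℕ) (Ω : Set (EuclideanSpace ℝ (Fin d))) (hΩ : IsCompact Ω)
    (hΩpos : 0 < volume Ω)
    (ε : ℝ) (hε : 0 < ε) (m : Fin N → ℝ) (hm : ∀ i, 0 < m i) (U : ℝ → ℝ)
    (X : Fin N → EuclideanSpace ℝ (Fin d))
    (T : EuclideanSpace ℝ (Fin d) → Fin N) (hTmeas : Measurable T)
    (hTopt : laguerreCost Ω ε m U X T = discreteEnergy Ω ε m U X)
    (L : Fin N → Set (EuclideanSpace ℝ (Fin d)))
    (hL : ∀ i, L i = T ⁻¹' {i} ∩ Ω)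
    (hpos : ∀ i, 0 < volume (L i))
    (b : Fin N → EuclideanSpace ℝ (Fin d))
    (hb : ∀ i, b i = ((volume (L i)).toReal)⁻¹ • ∫ x in L i, x) :
    ∀ Y : Fin N → EuclideanSpace ℝ (Fin d),
      discreteEnergy Ω ε m U Y
        ≤ discreteEnergy Ω ε m U X
          + ((∑ i, ((volume (L i)).toReal / ε) * ⟪X i - b i, Y i - X i⟫
              + ((volume Ω).toReal / (2 * ε)) * ∑ i, ‖X i - Y i‖ ^ 2 : ℝ) : EReal) := by
  intro Y
  have hΩmeas : MeasurableSet Ω := hΩ.measurableSet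
  have hΩfin : volume Ω ≠ ⊤ := hΩ.measure_lt_top.ne
  have hLmeas : ∀ i, MeasurableSet (L i) := fun i => by
    rw [hL]; exact (hTmeas (measurableSet_singleton i)).inter hΩmeas
  have hLsub : ∀ i, L i ⊆ Ω := fun i => by rw [hL]; exact Set.inter_subset_right
  have hLfin : ∀ i, volume (L i) ≠ ⊤ :=
    fun i => ((measure_mono (hLsub i)).trans_lt hΩ.measure_lt_top).ne
  have hLc : ∀ i, (volume (L i)).toReal ≠ 0 :=
    fun i => ENNReal.toReal_ne_zero.2 ⟨(hpos i).ne', hLfin i⟩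
  have hInt1 : ∀ i, IntegrableOn (fun x => x) (L i) volume := fun i =>
    (continuous_id.continuousOn.integrableOn_compact hΩ).mono_set (hLsub i)
  have hIntSq : ∀ (i) (q : EuclideanSpace ℝ (Fin d)),
      IntegrableOn (fun x : EuclideanSpace ℝ (Fin d) => ‖x - q‖ ^ 2) (L i) volume := fun i q =>
    (((continuous_id.sub continuous_const).norm.pow 2).continuousOn.integrableOn_compact
      hΩ).mono_set (hLsub i)
  have hUnion : ⋃ i, L i = Ω := by
    ext x
    simp only [Set.mem_iUnion, hL, Set.mem_inter_iff, Set.mem_preimage, Set.mem_singleton_iff]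
    exact ⟨fun ⟨i, _, h⟩ => h, fun h => ⟨T x, rfl, h⟩⟩
  have hdisj : Pairwise (Function.onFun Disjoint L) := by
    intro i j hij
    apply Set.disjoint_left.2
    intro x hxi hxj
    rw [hL] at hxi hxj
    exact hij (hxi.1.symm.trans hxj.1)
  have split : ∀ Z : Fin N → EuclideanSpace ℝ (Fin d),
      (∫ x in Ω, ‖x - Z (T x)‖ ^ 2 / (2 * ε))
        = ∑ i, ∫ x in L i, ‖x - Z i‖ ^ 2 / (2 * ε) := by
    intro Z
    have heq : ∀ i, Set.EqOn (fun x : EuclideanSpace ℝ (Fin d) => ‖x - Z i‖ ^ 2 / (2 * ε))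
        (fun x => ‖x - Z (T x)‖ ^ 2 / (2 * ε)) (L i) := by
      intro i x hx
      rw [hL] at hx
      simp only [Set.mem_inter_iff, Set.mem_preimage, Set.mem_singleton_iff] at hx
      simp [hx.1]
    have hint : ∀ i, IntegrableOn
        (fun x => ‖x - Z (T x)‖ ^ 2 / (2 * ε)) (L i) volume := fun i =>
      IntegrableOn.congr_fun ((hIntSq i (Z i)).div_const (2 * ε)) (heq i) (hLmeas i)
    rw [← hUnion, integral_iUnion_fintype hLmeas hdisj hint]
    exact Finset.sum_congr rfl fun i _ =>
      (setIntegral_congr_fun (hLmeas i) (heq i)).symm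
  -- the per-cell expansion
  have cell : ∀ i, ∫ x in L i, ‖x - Y i‖ ^ 2 / (2 * ε)
      = (∫ x in L i, ‖x - X i‖ ^ 2 / (2 * ε))
        + ((volume (L i)).toReal / ε) * ⟪X i - b i, Y i - X i⟫
        + (volume (L i)).toReal / (2 * ε) * ‖X i - Y i‖ ^ 2 := fun i =>
    cell_expand (hInt1 i) (hLc i) (hLfin i) hε (X i) (Y i) (b i)
      (hIntSq i (X i)) (hb i)
  have hmono : ∀ i, (volume (L i)).toReal ≤ (volume Ω).toReal := fun i =>
    ENNReal.toReal_mono hΩfin (measure_mono (hLsub i))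
  have hreal : (∫ x in Ω, ‖x - Y (T x)‖ ^ 2 / (2 * ε))
      ≤ (∫ x in Ω, ‖x - X (T x)‖ ^ 2 / (2 * ε))
        + (∑ i, ((volume (L i)).toReal / ε) * ⟪X i - b i, Y i - X i⟫
            + ((volume Ω).toReal / (2 * ε)) * ∑ i, ‖X i - Y i‖ ^ 2) := by
    rw [split Y, split X]
    have h1 : ∑ i, ∫ x in L i, ‖x - Y i‖ ^ 2 / (2 * ε)
        = ∑ i, ((∫ x in L i, ‖x - X i‖ ^ 2 / (2 * ε))
          + ((volume (L i)).toReal / ε) * ⟪X i - b i, Y i - X i⟫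
          + (volume (L i)).toReal / (2 * ε) * ‖X i - Y i‖ ^ 2) :=
      Finset.sum_congr rfl fun i _ => cell i
    rw [h1, Finset.sum_add_distrib, Finset.sum_add_distrib, Finset.mul_sum]
    have h2 : ∑ i, (volume (L i)).toReal / (2 * ε) * ‖X i - Y i‖ ^ 2
        ≤ ∑ i, (volume Ω).toReal / (2 * ε) * ‖X i - Y i‖ ^ 2 := by
      apply Finset.sum_le_sum
      intro i _
      apply mul_le_mul_of_nonneg_right _ (sq_nonneg _)
      exact (div_le_div_iff_of_pos_right (by linarith)).2 (hmono i)
    linarith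
  -- pass to `EReal`
  set s : ℝ := ∑ i, U (m i / (volume (L i)).toReal) * (volume (L i)).toReal with hs
  have hvol : ∀ i, volume (T ⁻¹' {i} ∩ Ω) = volume (L i) := fun i => by rw [hL]
  have hcost : ∀ Z : Fin N → EuclideanSpace ℝ (Fin d),
      laguerreCost Ω ε m U Z T
        = (((∫ x in Ω, ‖x - Z (T x)‖ ^ 2 / (2 * ε)) + s : ℝ) : EReal) := by
    intro Z
    unfold laguerreCost
    have h1 : ∀ i : Fin N,
        (if volume (T ⁻¹' {i} ∩ Ω) = 0 then (⊤ : EReal)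
          else ((U (m i / (volume (T ⁻¹' {i} ∩ Ω)).toReal)
                  * (volume (T ⁻¹' {i} ∩ Ω)).toReal : ℝ) : EReal))
          = ((U (m i / (volume (L i)).toReal) * (volume (L i)).toReal : ℝ) : EReal) := by
      intro i
      rw [hvol i, if_neg (hpos i).ne']
    rw [Finset.sum_congr rfl fun i _ => h1 i]
    rw [EReal.coe_add, hs]
    congr 1
    exact (map_sum (⟨⟨Real.toEReal, EReal.coe_zero⟩, EReal.coe_add⟩ : ℝ →+ EReal) _ _).symm
  have step1 : discreteEnergy Ω ε m U Y ≤ laguerreCost Ω ε m U Y T :=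
    iInf_le _ (⟨T, hTmeas⟩ : {T : EuclideanSpace ℝ (Fin d) → Fin N // Measurable T})
  refine step1.trans ?_
  rw [hcost Y, ← hTopt, hcost X, ← EReal.coe_add, EReal.coe_le_coe_iff]
  linarith
end

section
/- Let K ⊆ ℝ^d be a nonempty closed convex set, let T > 0, and let x : [0,T] → ℝ^d be differentiable. Suppose there are functions λ : [0,T] → [0,∞) and b : [0,T] → K such that x'(t) = −λ(t)·(x(t) − b(t)) for every t ∈ [0,T], and suppose x(0) ∈ K. Then x(t) ∈ K for all t ∈ [0,T]. -/
open Metric Set Filter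
open scoped RealInnerProductSpace Topology

/-- A curve attracted towards points of a nonempty closed convex set `K` with nonnegative
rates, starting in `K`, remains in `K`. -/
theorem curve_stays_in_convex
    (d : ℕ) (K : Set (EuclideanSpace ℝ (Fin d)))
    (hKne : K.Nonempty) (hKclosed : IsClosed K) (hKconvex : Convex ℝ K)
    (T : ℝ) (hT : 0 < T)
    (x : ℝ → EuclideanSpace ℝ (Fin d))
    (lam : ℝ → ℝ) (hlam : ∀ t ∈ Set.Icc 0 T, 0 ≤ lam t)
    (b : ℝ → EuclideanSpace ℝ (Fin d)) (hb : ∀ t ∈ Set.Icc 0 T, b t ∈ K)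
    (hderiv : ∀ t ∈ Set.Icc 0 T, HasDerivAt x (-(lam t) • (x t - b t)) t)
    (hx0 : x 0 ∈ K) :
    ∀ t ∈ Set.Icc 0 T, x t ∈ K := by
  set f : ℝ → ℝ := fun t => (infDist (x t) K) ^ 2 with hf_def
  have hxc : ContinuousOn x (Icc 0 T) := fun t ht =>
    (hderiv t ht).continuousAt.continuousWithinAt
  have hfc : ContinuousOn f (Icc 0 T) :=
    ((continuous_infDist_pt K).comp_continuousOn hxc).pow 2
  -- key liminf/slope bound
  have key : ∀ t ∈ Ico 0 T, ∀ r : ℝ, (fun _ : ℝ => (0:ℝ)) t < r →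
      ∃ᶠ z in 𝓝[>] t, (z - t)⁻¹ * (f z - f t) < r := by
    intro t ht r hr
    have htIcc : t ∈ Icc 0 T := ⟨ht.1, le_of_lt ht.2⟩
    -- nearest point y to x t in K
    obtain ⟨y, hyK, hy⟩ := hKclosed.exists_infDist_eq_dist hKne (x t)
    -- the projection inequality
    have hproj : ∀ w ∈ K, ⟪x t - y, w - y⟫ ≤ 0 := by
      have hnorm : ‖x t - y‖ = ⨅ w : K, ‖x t - w‖ := by
        rw [← dist_eq_norm, ← hy, infDist_eq_iInf]
        simp only [dist_eq_norm]
      exact (norm_eq_iInf_iff_real_inner_le_zero hKconvex hyK).mp hnorm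
    -- h z = ‖x z - y‖² has nonpositive derivative at t
    set h : ℝ → ℝ := fun z => ⟪x z - y, x z - y⟫ with hh_def
    have hd : HasDerivAt h
        (⟪x t - y, -(lam t) • (x t - b t)⟫ + ⟪-(lam t) • (x t - b t), x t - y⟫) t :=
      HasDerivAt.inner ℝ ((hderiv t htIcc).sub_const y) ((hderiv t htIcc).sub_const y)
    have hd_le : ⟪x t - y, -(lam t) • (x t - b t)⟫ + ⟪-(lam t) • (x t - b t), x t - y⟫ ≤ 0 := by
      have hsplit : ⟪x t - y, x t - b t⟫ = ⟪x t - y, x t - y⟫ - ⟪x t - y, b t - y⟫ := by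
        rw [← inner_sub_right]; congr 1; abel
      have hnn : (0:ℝ) ≤ ⟪x t - y, x t - b t⟫ := by
        have h1 := hproj (b t) (hb t htIcc)
        have h2 : (0:ℝ) ≤ ⟪x t - y, x t - y⟫ := real_inner_self_nonneg
        rw [hsplit]; linarith
      have e1 : ⟪x t - y, -(lam t) • (x t - b t)⟫ = -(lam t) * ⟪x t - y, x t - b t⟫ :=
        real_inner_smul_right _ _ _
      have e2 : ⟪-(lam t) • (x t - b t), x t - y⟫ = ⟪x t - y, -(lam t) • (x t - b t)⟫ :=
        real_inner_comm _ _
      rw [e2, e1]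
      have := mul_nonneg (hlam t htIcc) hnn
      nlinarith
    -- slope of h tends to h'(t) ≤ 0 < r
    have hslope := hasDerivAt_iff_tendsto_slope.mp hd
    have hev : ∀ᶠ z in 𝓝[≠] t, slope h t z < r :=
      hslope.eventually (Filter.Tendsto.eventually_lt_const (lt_of_le_of_lt hd_le hr)
        tendsto_id)
    have hev' : ∀ᶠ z in 𝓝[>] t, slope h t z < r :=
      hev.filter_mono (nhdsWithin_mono t fun z hz => ne_of_gt hz)
    refine (hev'.mp (eventually_mem_nhdsWithin.mono fun z hz hzr => ?_)).frequently
    have hzt : (0:ℝ) < z - t := sub_pos.mpr hz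
    -- f z ≤ h z and f t = h t
    have hfz : f z ≤ h z := by
      have h1 : infDist (x z) K ≤ ‖x z - y‖ := by
        rw [← dist_eq_norm]; exact infDist_le_dist_of_mem hyK
      have h2 : (0:ℝ) ≤ infDist (x z) K := infDist_nonneg
      have : h z = ‖x z - y‖ ^ 2 := real_inner_self_eq_norm_sq _
      simp only [hf_def, this]
      exact pow_le_pow_left₀ h2 h1 2
    have hft : f t = h t := by
      have : h t = ‖x t - y‖ ^ 2 := real_inner_self_eq_norm_sq _
      simp only [hf_def, this, hy, dist_eq_norm]
    calc (z - t)⁻¹ * (f z - f t) ≤ (z - t)⁻¹ * (h z - h t) := by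
          apply mul_le_mul_of_nonneg_left _ (le_of_lt (inv_pos.mpr hzt))
          rw [hft]; linarith
      _ = slope h t z := by rw [slope_def_field]; field_simp
      _ < r := hzr
  -- Grönwall: f ≤ 0 on [0,T]
  have hf0 : f 0 ≤ 0 := by
    have : infDist (x 0) K = 0 := by
      rw [(hKclosed.mem_iff_infDist_zero hKne).mp hx0]
    simp [hf_def, this]
  have hbound : ∀ t ∈ Ico 0 T, (fun _ : ℝ => (0:ℝ)) t ≤ 0 * f t + 0 := by
    intro t _; simp
  have hG := le_gronwallBound_of_liminf_deriv_right_le hfc key hf0 hbound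
  intro t ht
  have := hG t ht
  rw [gronwallBound_K0] at this
  simp only [mul_zero, add_zero, zero_mul] at this
  have hinf : infDist (x t) K = 0 := by
    have h3 : infDist (x t) K ^ 2 ≤ 0 := this
    have h2 : (0:ℝ) ≤ infDist (x t) K := infDist_nonneg
    nlinarith
  exact (hKclosed.mem_iff_infDist_zero hKne).mpr hinf
end

section
/- Let T > 0, Λ ≥ 0, K ≥ 0, D ≥ 0, and let u, v : [0,T] → ℝ^d be differentiable curves. Suppose there exist α, β : [0,T] → [0,Λ] and a, b : [0,T] → ℝ^d such that for every t ∈ [0,T]: u'(t) = −α(t)·(u(t) − a(t)), v'(t) = −β(t)·(v(t) − b(t)), ⟨u(t) − v(t), a(t) − b(t)⟩ ≥ 0, |α(t) − β(t)| ≤ K·|u(t) − v(t)|, and |v(t) − b(t)| ≤ D. Then (d/dt)(|u(t) − v(t)|²/2) ≥ −(Λ + K·D)·|u(t) − v(t)|² for every t, and consequently |u(t) − v(t)|² ≥ exp(−2·(Λ + K·D)·t)·|u(0) − v(0)|² for all t ∈ [0,T]; in particular, if u(0) ≠ v(0) then u(t) ≠ v(t) for all t ∈ [0,T]. -/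
open RealInnerProductSpace

/-- Pairwise-distance lower bound preventing particle collisions: under the monotonicity and
Lipschitz hypotheses, `(d/dt)(|u-v|²/2) ≥ -(Λ + K·D)|u-v|²`, hence
`|u(t)-v(t)|² ≥ e^{-2(Λ+K·D)t} |u(0)-v(0)|²`; in particular distinct particles never collide. -/
theorem no_collision_estimate
    (d : ℕ) (T : ℝ) (hT : 0 < T) (Λ K D : ℝ)
    (hΛ : 0 ≤ Λ) (hK : 0 ≤ K) (hD : 0 ≤ D)
    (u v : ℝ → EuclideanSpace ℝ (Fin d))
    (α β : ℝ → ℝ) (a b : ℝ → EuclideanSpace ℝ (Fin d))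
    (hα : ∀ t ∈ Set.Icc 0 T, α t ∈ Set.Icc 0 Λ)
    (hβ : ∀ t ∈ Set.Icc 0 T, β t ∈ Set.Icc 0 Λ)
    (hu : ∀ t ∈ Set.Icc 0 T, HasDerivAt u (-(α t) • (u t - a t)) t)
    (hv : ∀ t ∈ Set.Icc 0 T, HasDerivAt v (-(β t) • (v t - b t)) t)
    (hmono : ∀ t ∈ Set.Icc 0 T, 0 ≤ ⟪u t - v t, a t - b t⟫)
    (hlip : ∀ t ∈ Set.Icc 0 T, |α t - β t| ≤ K * ‖u t - v t‖)
    (hbound : ∀ t ∈ Set.Icc 0 T, ‖v t - b t‖ ≤ D) :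
    (∀ t ∈ Set.Icc 0 T,
        deriv (fun s => ‖u s - v s‖ ^ 2 / 2) t ≥ -(Λ + K * D) * ‖u t - v t‖ ^ 2)
      ∧ (∀ t ∈ Set.Icc 0 T,
          ‖u t - v t‖ ^ 2 ≥ Real.exp (-2 * (Λ + K * D) * t) * ‖u 0 - v 0‖ ^ 2)
      ∧ (u 0 ≠ v 0 → ∀ t ∈ Set.Icc 0 T, u t ≠ v t) := by
  set C := Λ + K * D with hCdef
  have hC : 0 ≤ C := by positivity
  -- derivative of the squared norm
  have key : ∀ t ∈ Set.Icc (0:ℝ) T,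
      HasDerivAt (fun s => ‖u s - v s‖ ^ 2)
        (2 * ⟪u t - v t, (-(α t) • (u t - a t)) - (-(β t) • (v t - b t))⟫) t := by
    intro t ht
    have h1 : HasDerivAt (fun s => u s - v s)
        ((-(α t) • (u t - a t)) - (-(β t) • (v t - b t))) t := (hu t ht).sub (hv t ht)
    have h2 := h1.inner ℝ h1
    have h3 : (fun s => (⟪u s - v s, u s - v s⟫ : ℝ)) = fun s => ‖u s - v s‖ ^ 2 := by
      funext s; rw [real_inner_self_eq_norm_sq]
    rw [h3] at h2
    refine h2.congr_deriv ?_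
    rw [real_inner_comm]
    ring
  -- inner product estimate
  have est : ∀ t ∈ Set.Icc (0:ℝ) T,
      -C * ‖u t - v t‖ ^ 2
        ≤ ⟪u t - v t, (-(α t) • (u t - a t)) - (-(β t) • (v t - b t))⟫ := by
    intro t ht
    have hrw : (-(α t) • (u t - a t)) - (-(β t) • (v t - b t))
        = (-(α t)) • (u t - v t) + (α t) • (a t - b t) + (β t - α t) • (v t - b t) := by
      module
    rw [hrw, inner_add_right, inner_add_right, inner_smul_right, inner_smul_right,
      inner_smul_right, real_inner_self_eq_norm_sq]
    have h1 := (hα t ht).1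
    have h2 := (hα t ht).2
    have h5 := hmono t ht
    have h6 := hlip t ht
    have h7 := hbound t ht
    have hn : (0:ℝ) ≤ ‖u t - v t‖ := norm_nonneg _
    have hcs : |(⟪u t - v t, v t - b t⟫ : ℝ)| ≤ ‖u t - v t‖ * D := by
      refine (abs_real_inner_le_norm _ _).trans ?_
      exact mul_le_mul_of_nonneg_left h7 hn
    have h8 : |(β t - α t) * ⟪u t - v t, v t - b t⟫| ≤ (K * ‖u t - v t‖) * (‖u t - v t‖ * D) := by
      rw [abs_mul]
      refine mul_le_mul ?_ hcs (abs_nonneg _) (by positivity)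
      rwa [abs_sub_comm]
    have h9 := neg_abs_le ((β t - α t) * ⟪u t - v t, v t - b t⟫)
    have h10 : 0 ≤ α t * ⟪u t - v t, a t - b t⟫ := mul_nonneg h1 h5
    have h11 : α t * ‖u t - v t‖ ^ 2 ≤ Λ * ‖u t - v t‖ ^ 2 :=
      mul_le_mul_of_nonneg_right h2 (sq_nonneg _)
    nlinarith [h8, h9, h10, h11]
  -- the exponentially weighted quantity
  set g : ℝ → ℝ := fun s => Real.exp (2 * C * s) * ‖u s - v s‖ ^ 2 with hgdef
  have hg : ∀ t ∈ Set.Icc (0:ℝ) T,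
      HasDerivAt g (2 * C * Real.exp (2 * C * t) * ‖u t - v t‖ ^ 2
        + Real.exp (2 * C * t)
          * (2 * ⟪u t - v t, (-(α t) • (u t - a t)) - (-(β t) • (v t - b t))⟫)) t := by
    intro t ht
    have he : HasDerivAt (fun s => Real.exp (2 * C * s)) (2 * C * Real.exp (2 * C * t)) t := by
      have h0 : HasDerivAt (fun s : ℝ => 2 * C * s) (2 * C) t := by
        simpa using (hasDerivAt_id t).const_mul (2 * C)
      simpa [mul_comm] using h0.exp
    exact he.mul (key t ht)
  have hgnn : ∀ t ∈ Set.Icc (0:ℝ) T,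
      0 ≤ 2 * C * Real.exp (2 * C * t) * ‖u t - v t‖ ^ 2
        + Real.exp (2 * C * t)
          * (2 * ⟪u t - v t, (-(α t) • (u t - a t)) - (-(β t) • (v t - b t))⟫) := by
    intro t ht
    have hexp : (0:ℝ) < Real.exp (2 * C * t) := Real.exp_pos _
    have := est t ht
    nlinarith [this, hexp]
  have hmonog : MonotoneOn g (Set.Icc 0 T) := by
    apply monotoneOn_of_deriv_nonneg (convex_Icc 0 T)
    · intro t ht
      exact (hg t ht).continuousAt.continuousWithinAt
    · intro t ht
      rw [interior_Icc] at ht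
      exact (hg t (Set.mem_Icc_of_Ioo ht)).differentiableAt.differentiableWithinAt
    · intro t ht
      rw [interior_Icc] at ht
      rw [(hg t (Set.mem_Icc_of_Ioo ht)).deriv]
      exact hgnn t (Set.mem_Icc_of_Ioo ht)
  have gronwall : ∀ t ∈ Set.Icc (0:ℝ) T,
      Real.exp (-2 * C * t) * ‖u 0 - v 0‖ ^ 2 ≤ ‖u t - v t‖ ^ 2 := by
    intro t ht
    have h0mem : (0:ℝ) ∈ Set.Icc (0:ℝ) T := Set.mem_Icc.mpr ⟨le_refl _, hT.le⟩
    have hmg := hmonog h0mem ht ht.1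
    have hg0 : g 0 = ‖u 0 - v 0‖ ^ 2 := by simp [hgdef]
    rw [hg0] at hmg
    have hexp : (0:ℝ) ≤ Real.exp (-2 * C * t) := (Real.exp_pos _).le
    calc Real.exp (-2 * C * t) * ‖u 0 - v 0‖ ^ 2
        ≤ Real.exp (-2 * C * t) * (Real.exp (2 * C * t) * ‖u t - v t‖ ^ 2) :=
          mul_le_mul_of_nonneg_left hmg hexp
      _ = ‖u t - v t‖ ^ 2 := by
          rw [← mul_assoc, ← Real.exp_add]
          ring_nf
          simp
  refine ⟨?_, ?_, ?_⟩
  · intro t ht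
    have hd : HasDerivAt (fun s => ‖u s - v s‖ ^ 2 / 2)
        (⟪u t - v t, (-(α t) • (u t - a t)) - (-(β t) • (v t - b t))⟫) t := by
      have := (key t ht).div_const 2
      refine this.congr_deriv ?_
      ring
    rw [hd.deriv]
    exact est t ht
  · intro t ht
    exact gronwall t ht
  · intro hne t ht heq
    have h0 : (0:ℝ) < ‖u 0 - v 0‖ ^ 2 := by
      have h' : u 0 - v 0 ≠ 0 := sub_ne_zero.mpr hne
      exact pow_pos (norm_pos_iff.mpr h') 2
    have := gronwall t ht
    rw [heq, sub_self, norm_zero] at this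
    nlinarith [Real.exp_pos (-2 * C * t), this]
end
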